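/- Let R be a commutative ring and let M be a 2n×2n matrix over R written in block form M = [[A, B],[C, D]] with n×n blocks A, B, C, D. Suppose each of A, B, C, D is lower triangular, and in addition C is strictly lower triangular (all its diagonal entries are 0). Then det M = (det A)·(det D); in particular det M is the product of all diagonal entries of M. -/

import Mathlib

open Finset Matrix

/-- Interleaving equivalence: even indices go to the second summand, odd to the first. -/
def stmt6Interleave (n : ℕ) : Fin (2 * n) ≃ (Fin n ⊕ Fin n) where
  toFun k := if h : k.val % 2 = 0
      then Sum.inr ⟨k.val / 2, by omega⟩ else Sum.inl ⟨k.val / 2, by omega⟩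
  invFun x := Sum.elim (fun i => (⟨2 * i.val + 1, by omega⟩ : Fin (2 * n)))
      (fun j => (⟨2 * j.val, by omega⟩ : Fin (2 * n))) x
  left_inv k := by
    by_cases h : k.val % 2 = 0 <;> simp only [h, dite_true, dite_false, reduceDIte,
      Sum.elim_inl, Sum.elim_inr] <;> exact Fin.ext (by simp; omega)
  right_inv x := by
    rcases x with i | j
    · have h : (2 * i.val + 1) % 2 = 1 := by omega
      simp only [Sum.elim_inl, h]
      refine (dif_neg (by omega)).trans ?_
      congr 1
      exact Fin.ext (by simp; omega)
    · have h : (2 * j.val) % 2 = 0 := by omega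
      simp only [Sum.elim_inr]
      refine (dif_pos h).trans ?_
      congr 1
      exact Fin.ext (by simp)

theorem stmt_6 (n : ℕ) (R : Type*) [CommRing R]
    (A B C D : Matrix (Fin n) (Fin n) R)
    (hA : ∀ i j : Fin n, i < j → A i j = 0)
    (hB : ∀ i j : Fin n, i < j → B i j = 0)
    (hC : ∀ i j : Fin n, i ≤ j → C i j = 0)
    (hD : ∀ i j : Fin n, i < j → D i j = 0) :
    (Matrix.fromBlocks A B C D).det = A.det * D.det ∧
    (Matrix.fromBlocks A B C D).det = (∏ i : Fin n, A i i) * ∏ i : Fin n, D i i := by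
  set e := stmt6Interleave n with he
  set M := Matrix.fromBlocks A B C D with hM
  set N := M.submatrix e e with hN
  have hdet : N.det = M.det := Matrix.det_submatrix_equiv_self e M
  -- N is lower triangular
  have htri : ∀ k l : Fin (2 * n), k < l → N k l = 0 := by
    intro k l hkl
    have hkl' : k.val < l.val := hkl
    show M (e k) (e l) = 0
    by_cases hk0 : k.val % 2 = 0 <;> by_cases hl0 : l.val % 2 = 0 <;>
      simp only [he, stmt6Interleave, Equiv.coe_fn_mk, hk0, hl0, dite_true, dite_false,
        reduceDIte, hM, Matrix.fromBlocks_apply₁₁, Matrix.fromBlocks_apply₁₂,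
        Matrix.fromBlocks_apply₂₁, Matrix.fromBlocks_apply₂₂]
    · exact hD _ _ (by rw [Fin.lt_def]; simp; omega)
    · exact hC _ _ (by rw [Fin.le_def]; simp; omega)
    · exact hB _ _ (by rw [Fin.lt_def]; simp; omega)
    · exact hA _ _ (by rw [Fin.lt_def]; simp; omega)
  have hNdet : N.det = ∏ k : Fin (2 * n), N k k :=
    Matrix.det_of_lowerTriangular N (fun i j h => htri i j h)
  have hprod : (∏ k : Fin (2 * n), N k k) = (∏ i : Fin n, A i i) * ∏ i : Fin n, D i i := by
    have h1 : (∏ k : Fin (2 * n), N k k) = ∏ x : Fin n ⊕ Fin n, M x x := by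
      rw [← Equiv.prod_comp e (fun x => M x x)]
      rfl
    rw [h1, Fintype.prod_sum_type]
    rfl
  have hAdet : A.det = ∏ i : Fin n, A i i :=
    Matrix.det_of_lowerTriangular A (fun i j h => hA i j h)
  have hDdet : D.det = ∏ i : Fin n, D i i :=
    Matrix.det_of_lowerTriangular D (fun i j h => hD i j h)
  constructor
  · rw [← hdet, hNdet, hprod, hAdet, hDdet]
  · rw [← hdet, hNdet, hprod]
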